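/- The per-interval error is monotone under inclusion of intervals: if (a, b] ⊆ (a', b'] and P(X ∈ (a, b]) > 0, then Δ_X((a', b']) ≥ Δ_X((a, b]). -/

import Mathlib

open MeasureTheory

/-- `μ_{(u,v]} = E[X | X ∈ (u, v]]`. -/
noncomputable def intervalMean {Ω : Type*} [MeasurableSpace Ω]
    (P : Measure Ω) (X : Ω → ℝ) (u v : ℝ) : ℝ :=
  (∫ ω in {ω | X ω ∈ Set.Ioc u v}, X ω ∂P) / (P {ω | X ω ∈ Set.Ioc u v}).toReal

/-- Per-interval approximation error
`Δ_X((u,v]) = E[1_{u < X ≤ μ_{(u,v]}} (μ_{(u,v]} − X)]`. -/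
noncomputable def Delta {Ω : Type*} [MeasurableSpace Ω]
    (P : Measure Ω) (X : Ω → ℝ) (u v : ℝ) : ℝ :=
  ∫ ω in {ω | X ω ∈ Set.Ioc u (intervalMean P X u v)},
    (intervalMean P X u v - X ω) ∂P

section Aux

variable {Ω : Type*} [MeasurableSpace Ω] {P : Measure Ω} [IsProbabilityMeasure P]
variable {X : Ω → ℝ}

lemma aux_mean_mem (hXm : Measurable X) (hX : Integrable X P) {u v : ℝ}
    (hpos : 0 < P {ω | X ω ∈ Set.Ioc u v}) :
    u < intervalMean P X u v ∧ intervalMean P X u v ≤ v := by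
  set S := {ω | X ω ∈ Set.Ioc u v} with hS
  have hSm : MeasurableSet S := hXm measurableSet_Ioc
  have hp : 0 < (P S).toReal := ENNReal.toReal_pos hpos.ne' (measure_ne_top P S)
  have hint : IntegrableOn X S P := hX.integrableOn
  have hcon : ∀ c : ℝ, IntegrableOn (fun _ : Ω => c) S P := fun c =>
    (integrableOn_const_iff).mpr (Or.inr (measure_lt_top P S))
  constructor
  · rw [intervalMean, lt_div_iff₀ hp]
    have key : 0 < ∫ ω in S, (X ω - u) ∂P := by
      rw [setIntegral_pos_iff_support_of_nonneg_ae
        ((ae_restrict_mem hSm).mono fun ω hω => sub_nonneg.mpr hω.1.le)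
        (hint.sub (hcon u))]
      refine hpos.trans_le (measure_mono fun ω hω => ⟨sub_ne_zero.mpr (ne_of_gt hω.1), hω⟩)
    have hsub : ∫ ω in S, (X ω - u) ∂P = (∫ ω in S, X ω ∂P) - u * (P S).toReal := by
      rw [integral_sub hint (hcon u), setIntegral_const, measureReal_def, smul_eq_mul, mul_comm]
    linarith [key, hsub ▸ key]
  · rw [intervalMean, div_le_iff₀ hp]
    have : ∫ ω in S, X ω ∂P ≤ ∫ ω in S, (v : ℝ) ∂P :=
      setIntegral_mono_on hint (hcon v) hSm fun ω hω => hω.2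
    rw [setIntegral_const, measureReal_def, smul_eq_mul, mul_comm] at this
    exact this

lemma aux_balance (hXm : Measurable X) (hX : Integrable X P) {u v : ℝ}
    (hpos : 0 < P {ω | X ω ∈ Set.Ioc u v}) :
    Delta P X u v =
      ∫ ω in {ω | X ω ∈ Set.Ioc (intervalMean P X u v) v},
        (X ω - intervalMean P X u v) ∂P := by
  set μ := intervalMean P X u v with hμ
  obtain ⟨h1, h2⟩ := aux_mean_mem hXm hX hpos
  set S := {ω | X ω ∈ Set.Ioc u v} with hS
  have hp : 0 < (P S).toReal := ENNReal.toReal_pos hpos.ne' (measure_ne_top P S)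
  have hint : IntegrableOn X S P := hX.integrableOn
  have hcon : ∀ (c : ℝ) (T : Set Ω), IntegrableOn (fun _ : Ω => c) T P := fun c T =>
    (integrableOn_const_iff).mpr (Or.inr (measure_lt_top P T))
  have hzero : ∫ ω in S, (μ - X ω) ∂P = 0 := by
    rw [integral_sub (hcon μ S) hint, setIntegral_const, measureReal_def, smul_eq_mul]
    have : μ * (P S).toReal = ∫ ω in S, X ω ∂P := by
      rw [hμ, intervalMean, ← hS]
      field_simp
    rw [mul_comm] at this
    linarith [this]
  have hsplit : S = {ω | X ω ∈ Set.Ioc u μ} ∪ {ω | X ω ∈ Set.Ioc μ v} := by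
    ext ω
    simp only [hS, Set.mem_setOf_eq, Set.mem_union]
    rw [← Set.mem_union, Set.Ioc_union_Ioc_eq_Ioc h1.le h2]
  have hdisj : Disjoint {ω | X ω ∈ Set.Ioc u μ} {ω | X ω ∈ Set.Ioc μ v} := by
    rw [Set.disjoint_left]
    intro ω hω1 hω2
    exact absurd hω1.2 (not_le.mpr hω2.1)
  have hm2 : MeasurableSet {ω | X ω ∈ Set.Ioc μ v} := hXm measurableSet_Ioc
  have hIs : ∀ T : Set Ω, IntegrableOn (fun ω => μ - X ω) T P := fun T =>
    ((hcon μ T).sub hX.integrableOn)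
  have hsum : ∫ ω in {ω | X ω ∈ Set.Ioc u μ}, (μ - X ω) ∂P
      + ∫ ω in {ω | X ω ∈ Set.Ioc μ v}, (μ - X ω) ∂P = 0 := by
    rw [← setIntegral_union hdisj hm2 (hIs _) (hIs _), ← hsplit, hzero]
  have hneg : ∫ ω in {ω | X ω ∈ Set.Ioc μ v}, (X ω - μ) ∂P
      = - ∫ ω in {ω | X ω ∈ Set.Ioc μ v}, (μ - X ω) ∂P := by
    rw [← integral_neg]
    congr 1
    ext ω
    ring
  rw [Delta, ← hμ, hneg]
  linarith [hsum]

lemma aux_key (hXm : Measurable X) (hX : Integrable X P) {a b a' b' : ℝ} (hab : a < b)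
    (hsub : Set.Ioc a b ⊆ Set.Ioc a' b')
    (hpos : 0 < P {ω | X ω ∈ Set.Ioc a b}) :
    Delta P X a b ≤ Delta P X a' b' := by
  obtain ⟨hb, ha⟩ := (Set.Ioc_subset_Ioc_iff hab).mp hsub
  have hpos' : 0 < P {ω | X ω ∈ Set.Ioc a' b'} :=
    hpos.trans_le (measure_mono fun ω h => hsub h)
  obtain ⟨hm1, hm2⟩ := aux_mean_mem hXm hX hpos
  obtain ⟨hm1', hm2'⟩ := aux_mean_mem hXm hX hpos'
  set μ := intervalMean P X a b with hμ
  set μ' := intervalMean P X a' b' with hμ'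
  have hIs : ∀ (c : ℝ) (T : Set Ω), IntegrableOn (fun ω => c - X ω) T P := fun c T =>
    (((integrableOn_const_iff).mpr (Or.inr (measure_lt_top P T))).sub hX.integrableOn)
  have hIs' : ∀ (c : ℝ) (T : Set Ω), IntegrableOn (fun ω => X ω - c) T P := fun c T =>
    (hX.integrableOn.sub ((integrableOn_const_iff).mpr (Or.inr (measure_lt_top P T))))
  rcases le_total μ μ' with h | h
  · rw [Delta, Delta, ← hμ, ← hμ']
    calc ∫ ω in {ω | X ω ∈ Set.Ioc a μ}, (μ - X ω) ∂P
        ≤ ∫ ω in {ω | X ω ∈ Set.Ioc a μ}, (μ' - X ω) ∂P := by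
          apply integral_mono (hIs μ _) (hIs μ' _)
          intro ω; simp only; linarith
      _ ≤ ∫ ω in {ω | X ω ∈ Set.Ioc a' μ'}, (μ' - X ω) ∂P := by
          apply setIntegral_mono_set (hIs μ' _)
          · exact (ae_restrict_mem (hXm measurableSet_Ioc)).mono fun ω hω =>
              sub_nonneg.mpr hω.2
          · exact HasSubset.Subset.eventuallyLE fun ω hω => ⟨ha.trans_lt hω.1, hω.2.trans h⟩
  · rw [aux_balance hXm hX hpos, aux_balance hXm hX hpos', ← hμ, ← hμ']
    calc ∫ ω in {ω | X ω ∈ Set.Ioc μ b}, (X ω - μ) ∂P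
        ≤ ∫ ω in {ω | X ω ∈ Set.Ioc μ b}, (X ω - μ') ∂P := by
          apply integral_mono (hIs' μ _) (hIs' μ' _)
          intro ω; simp only; linarith
      _ ≤ ∫ ω in {ω | X ω ∈ Set.Ioc μ' b'}, (X ω - μ') ∂P := by
          apply setIntegral_mono_set (hIs' μ' _)
          · exact (ae_restrict_mem (hXm measurableSet_Ioc)).mono fun ω hω =>
              sub_nonneg.mpr (le_of_lt hω.1)
          · exact HasSubset.Subset.eventuallyLE fun ω hω => ⟨h.trans_lt hω.1, hω.2.trans hb⟩

end Aux

/-- The per-interval error is monotone under inclusion of intervals: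
if `(a, b] ⊆ (a', b']` and `P(X ∈ (a, b]) > 0`, then `Δ_X((a', b']) ≥ Δ_X((a, b])`. -/
theorem Delta_mono {Ω : Type*} [MeasurableSpace Ω]
    (P : Measure Ω) [IsProbabilityMeasure P]
    (X : Ω → ℝ) (hX : Integrable X P)
    (a b a' b' : ℝ) (hab : a < b)
    (hsub : Set.Ioc a b ⊆ Set.Ioc a' b')
    (hpos : 0 < P {ω | X ω ∈ Set.Ioc a b}) :
    Delta P X a b ≤ Delta P X a' b' := by
  obtain ⟨Y, hYm, hXY⟩ := hX.1
  have hsets : ∀ u v : ℝ, {ω | X ω ∈ Set.Ioc u v} =ᵐ[P] {ω | Y ω ∈ Set.Ioc u v} := by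
    intro u v
    exact Filter.eventuallyEq_set.mpr (hXY.mono fun ω h => by
      simp only [Set.mem_setOf_eq, h])
  have hmeas : ∀ u v : ℝ, P {ω | X ω ∈ Set.Ioc u v} = P {ω | Y ω ∈ Set.Ioc u v} :=
    fun u v => measure_congr (hsets u v)
  have hmean : ∀ u v : ℝ, intervalMean P X u v = intervalMean P Y u v := by
    intro u v
    rw [intervalMean, intervalMean, hmeas,
      Measure.restrict_congr_set (hsets u v),
      integral_congr_ae (ae_restrict_of_ae hXY)]
  have hDelta : ∀ u v : ℝ, Delta P X u v = Delta P Y u v := by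
    intro u v
    rw [Delta, Delta, hmean u v,
      Measure.restrict_congr_set (hsets u (intervalMean P Y u v)),
      integral_congr_ae (ae_restrict_of_ae (hXY.mono fun ω h => by rw [h]))]
  rw [hDelta, hDelta]
  exact aux_key hYm.measurable (hX.congr hXY) hab hsub ((hmeas a b) ▸ hpos)
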